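/- For the discrete Green's function G₂ of the second-order narrow-stencil operator, given by (G₂)_{i,j} = x_j(1 − x_i/ℓ) for 0 ≤ j ≤ i ≤ n and (G₂)_{i,j} = x_i(1 − x_j/ℓ) for 0 ≤ i ≤ j ≤ n (with x_i = ih, ℓ = nh), and d_L = (−1, 1, 0, …, 0)ᵀ/h, d_R = (0, …, 0, −1, 1)ᵀ/h, the vectors b_L := 𝟙 − x/ℓ − G₂d_L and b_R := x/ℓ + G₂d_R satisfy b_L = e_L and b_R = e_R, and consequently ξ_L = ξ_R = 1/h and ξ_C = 0. -/

import Mathlib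

open Matrix

lemma sum_two' {N : ℕ} (a b : Fin N) (hab : a ≠ b) (g : Fin N → ℝ)
    (hg : ∀ j, j ≠ a → j ≠ b → g j = 0) :
    ∑ j, g j = g a + g b := by
  rw [← Finset.sum_pair hab]
  refine (Finset.sum_subset (Finset.subset_univ _) ?_).symm
  intro j _ hj
  simp only [Finset.mem_insert, Finset.mem_singleton, not_or] at hj
  exact hg j hj.1 hj.2

theorem stmt14 (n : ℕ) (hn : 2 ≤ n) (h : ℝ) (hh : 0 < h)
    (x : Fin (n+1) → ℝ) (hx : x = fun (i : Fin (n+1)) => h * ((i : ℕ) : ℝ))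
    (ℓ : ℝ) (hℓ : ℓ = n * h)
    (G2 : Matrix (Fin (n+1)) (Fin (n+1)) ℝ)
    (hG2 : G2 = Matrix.of fun (i j : Fin (n+1)) =>
      if (j : ℕ) ≤ (i : ℕ) then x j * (1 - x i / ℓ) else x i * (1 - x j / ℓ))
    (dL dR eL eR : Fin (n+1) → ℝ)
    (hdL : dL = fun (i : Fin (n+1)) => if (i : ℕ) = 0 then -(1/h) else if (i : ℕ) = 1 then 1/h else 0)
    (hdR : dR = fun (i : Fin (n+1)) => if (i : ℕ) = n then 1/h else if (i : ℕ) + 1 = n then -(1/h) else 0)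
    (heL : eL = fun i => if i = 0 then 1 else 0)
    (heR : eR = fun i => if i = Fin.last n then 1 else 0)
    (bL bR : Fin (n+1) → ℝ)
    (hbL : bL = fun i => 1 - x i / ℓ - (G2 *ᵥ dL) i)
    (hbR : bR = fun i => x i / ℓ + (G2 *ᵥ dR) i) :
    bL = eL ∧ bR = eR ∧ -(dL ⬝ᵥ bL) = 1 / h ∧ dR ⬝ᵥ bR = 1 / h
      ∧ dL ⬝ᵥ bR = 0 := by
  have hh0 : h ≠ 0 := ne_of_gt hh
  have hn0 : (0:ℝ) < (n:ℝ) := by exact_mod_cast Nat.lt_of_lt_of_le (by norm_num) hn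
  have hn0' : (n:ℝ) ≠ 0 := ne_of_gt hn0
  have hℓ0 : ℓ ≠ 0 := by rw [hℓ]; positivity
  set j0 : Fin (n+1) := ⟨0, by omega⟩ with hj0
  set j1 : Fin (n+1) := ⟨1, by omega⟩ with hj1
  set jm : Fin (n+1) := ⟨n-1, by omega⟩ with hjm
  set jn : Fin (n+1) := Fin.last n with hjn
  have hcastm : ((n-1 : ℕ) : ℝ) = (n:ℝ) - 1 := by
    have h1 : 1 ≤ n := by omega
    push_cast [h1]; ring
  have hdL0 : dL j0 = -(1/h) := by simp [hdL, hj0]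
  have hdL1 : dL j1 = 1/h := by rw [hdL]; simp only [hj1]; norm_num
  have hdRm : dR jm = -(1/h) := by
    rw [hdR]; simp only [hjm]
    rw [if_neg (by omega), if_pos (by omega)]
  have hdRn : dR jn = 1/h := by simp [hdR, hjn, Fin.last]
  have hBL : bL = eL := by
    funext i
    have hsum : (G2 *ᵥ dL) i = G2 i j0 * dL j0 + G2 i j1 * dL j1 := by
      show ∑ j, G2 i j * dL j = _
      apply sum_two' j0 j1 (by simp [hj0, hj1, Fin.ext_iff])
      intro j ha hb
      have hv0 : (j:ℕ) ≠ 0 := fun hv => ha (Fin.ext hv)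
      have hv1 : (j:ℕ) ≠ 1 := fun hv => hb (Fin.ext hv)
      simp only [hdL, hv0, hv1, ↓reduceIte, mul_zero]
    have hG0 : G2 i j0 = 0 := by simp [hG2, hx, hj0]
    rw [hbL, heL]
    show 1 - x i / ℓ - (G2 *ᵥ dL) i = if i = 0 then 1 else 0
    rcases Nat.eq_zero_or_pos (i:ℕ) with hi | hi
    · have hi0 : i = 0 := Fin.ext hi
      have hG1 : G2 i j1 = 0 := by
        rw [hG2]; simp only [Matrix.of_apply]
        rw [if_neg (by simp [hj1]; omega)]
        simp [hx, hi]
      rw [hsum, hG0, hG1, if_pos hi0]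
      simp [hx, hi]
    · have hne : i ≠ 0 := by
        intro hh'; rw [hh'] at hi; simp at hi
      have hG1 : G2 i j1 = h * (1 - x i / ℓ) := by
        rw [hG2]; simp only [Matrix.of_apply]
        rw [if_pos (by show 1 ≤ (i:ℕ); omega)]
        simp [hx, hj1]
      rw [hsum, hG0, hG1, hdL0, hdL1, if_neg hne]
      field_simp
      ring
  have hBR : bR = eR := by
    funext i
    have hsum : (G2 *ᵥ dR) i = G2 i jm * dR jm + G2 i jn * dR jn := by
      show ∑ j, G2 i j * dR j = _
      apply sum_two' jm jn (by simp [hjm, hjn, Fin.ext_iff, Fin.last]; omega)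
      intro j ha hb
      have hvn : (j:ℕ) ≠ n := fun hv => hb (Fin.ext hv)
      have hvm : (j:ℕ) + 1 ≠ n := by
        intro hv; exact ha (Fin.ext (by simp [hjm]; omega))
      simp [hdR, hvn, hvm]
    have hzn : 1 - x jn / ℓ = 0 := by
      simp only [hx, hjn, Fin.val_last, hℓ]
      field_simp
      ring
    have hGn : G2 i jn = 0 := by
      rw [hG2]; simp only [Matrix.of_apply]
      by_cases hc : (jn:ℕ) ≤ (i:ℕ)
      · rw [if_pos hc]
        have hi : i = jn := Fin.ext (by simp only [hjn, Fin.val_last] at hc ⊢; omega)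
        rw [hi, hzn, mul_zero]
      · rw [if_neg hc, hzn, mul_zero]
    rw [hbR, heR]
    show x i / ℓ + (G2 *ᵥ dR) i = if i = jn then 1 else 0
    have hin : (i:ℕ) ≤ n := by omega
    rcases lt_or_ge (i:ℕ) (n-1) with hi | hi
    · have hGm : G2 i jm = x i * (1 - x jm / ℓ) := by
        rw [hG2]; simp only [Matrix.of_apply]
        rw [if_neg (by simp [hjm]; omega)]
      have hiR : i ≠ jn := by
        intro hv; rw [hv] at hi; simp [hjn, Fin.val_last] at hi; omega
      rw [hsum, hGn, hGm, hdRm, hdRn, if_neg hiR]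
      simp only [hx, hjm, hℓ, hcastm, mul_zero, add_zero, zero_mul]
      field_simp
      ring
    rcases Nat.eq_or_lt_of_le hi with hi' | hi'
    · -- i.val = n - 1
      have hGm : G2 i jm = x jm * (1 - x i / ℓ) := by
        rw [hG2]; simp only [Matrix.of_apply]
        rw [if_pos (by simp [hjm]; omega)]
      have hiv : ((i:ℕ) : ℝ) = (n:ℝ) - 1 := by rw [← hi', hcastm]
      have hiR : i ≠ jn := by
        intro hv; rw [hv] at hi'; simp [hjn, Fin.val_last] at hi'; omega
      rw [hsum, hGn, hGm, hdRm, hdRn, if_neg hiR]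
      simp only [hx, hjm, hℓ, hcastm, hiv, mul_zero, add_zero, zero_mul]
      field_simp
      ring
    · -- i.val = n
      have hiv : (i:ℕ) = n := by omega
      have hiR : i = jn := Fin.ext (by simpa [hjn, Fin.val_last] using hiv)
      have hGm : G2 i jm = x jm * (1 - x i / ℓ) := by
        rw [hG2]; simp only [Matrix.of_apply]
        rw [if_pos (by simp [hjm]; omega)]
      have hzi : 1 - x i / ℓ = 0 := by rw [hiR]; exact hzn
      rw [hsum, hGn, hGm, hzi, mul_zero, zero_mul, if_pos hiR]
      simp only [hx, hiv, hℓ, mul_zero, zero_mul, add_zero, zero_add]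
      field_simp
  refine ⟨hBL, hBR, ?_, ?_, ?_⟩
  · rw [hBL]
    have : dL ⬝ᵥ eL = dL 0 := by
      simp [dotProduct, heL, mul_ite]
    rw [this, hdL]
    norm_num
  · rw [hBR]
    have : dR ⬝ᵥ eR = dR jn := by
      simp [dotProduct, heR, mul_ite]
    rw [this, hdRn]
  · rw [hBR]
    have : dL ⬝ᵥ eR = dL jn := by
      simp [dotProduct, heR, mul_ite]
    rw [this, hdL]
    simp only [hjn, Fin.val_last]
    rw [if_neg (by omega), if_neg (by omega)]
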